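/- Let X be a compact topological space, f a real-valued function on X, and (f_n) a sequence of lower semicontinuous functions on X converging pointwise to f and satisfying the almost-monotonicity condition: for every η > 0 there is N with f_m ≥ f_n − η for all m ≥ n ≥ N. Then for every η > 0 there exists q ∈ ℕ such that inf_{x∈X} f_n(x) ≥ inf_{x∈X} f(x) − η for all n ≥ q. -/
import Mathlib


open Filter Topology

/-- A lower semicontinuous function on a compact space is bounded below. -/
lemma lsc_bddBelow {X : Type*} [TopologicalSpace X] [CompactSpace X]
    {g : X → ℝ} (hg : LowerSemicontinuous g) : BddBelow (Set.range g) := by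
  have hcov : (Set.univ : Set X) ⊆ ⋃ x : X, {y | g x - 1 < g y} := by
    intro y _
    exact Set.mem_iUnion.2 ⟨y, by simp [sub_lt_self _ one_pos]⟩
  obtain ⟨t, ht⟩ := isCompact_univ.elim_finite_subcover
    (fun x : X => {y | g x - 1 < g y})
    (fun x => (lowerSemicontinuous_iff_isOpen_preimage.1 hg (g x - 1)))
    hcov
  rcases t.eq_empty_or_nonempty with rfl | hne
  · simp only [Finset.notMem_empty, Set.iUnion_of_empty, Set.iUnion_empty] at ht
    have : (Set.univ : Set X) = ∅ := Set.eq_empty_iff_forall_notMem.2 fun y => fun h => ht h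
    refine ⟨0, ?_⟩
    rintro - ⟨y, rfl⟩
    exact absurd (Set.mem_univ y) (by simp [this])
  · obtain ⟨b, hbt, hb⟩ := t.exists_min_image (fun x => g x - 1) hne
    refine ⟨g b - 1, ?_⟩
    rintro - ⟨y, rfl⟩
    obtain ⟨x, hxt, hxy⟩ := Set.mem_iUnion₂.1 (ht (Set.mem_univ y))
    have := hb x hxt
    simp only [Set.mem_setOf_eq] at hxy
    linarith

/-- **Compactness step of the Dini-type lemma.**
Let `(F n)` be lower semicontinuous functions on a compact space `X` converging
pointwise to `f`, almost monotone in the sense that for every η > 0 there is `N`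
with `F m ≥ F n − η` for all `m ≥ n ≥ N`.  Then for every η > 0 there is `q`
such that `inf F n (X) ≥ inf f (X) − η` for all `n ≥ q`. -/
theorem dini_compactness_step
    {X : Type*} [TopologicalSpace X] [CompactSpace X] [Nonempty X]
    (F : ℕ → X → ℝ) (f : X → ℝ)
    (hlsc : ∀ n, LowerSemicontinuous (F n))
    (hpt : ∀ x, Tendsto (fun n => F n x) atTop (𝓝 (f x)))
    (hmono : ∀ η : ℝ, 0 < η → ∃ N : ℕ, ∀ m n : ℕ, N ≤ n → n ≤ m →
      ∀ x, F n x - η ≤ F m x) :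
    ∀ η : ℝ, 0 < η → ∃ q : ℕ, ∀ n : ℕ, q ≤ n →
      (⨅ x, f x) - η ≤ ⨅ x, F n x := by
  -- f is bounded below
  have hfbdd : BddBelow (Set.range f) := by
    obtain ⟨N₁, hN₁⟩ := hmono 1 one_pos
    obtain ⟨c, hc⟩ := lsc_bddBelow (hlsc N₁)
    refine ⟨c - 1, ?_⟩
    rintro - ⟨x, rfl⟩
    have hle : F N₁ x - 1 ≤ f x := by
      refine ge_of_tendsto (hpt x) ?_
      filter_upwards [eventually_ge_atTop N₁] with m hm
      exact hN₁ m N₁ le_rfl hm x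
    have := hc ⟨x, rfl⟩
    linarith
  have hinf_le : ∀ x, (⨅ y, f y) ≤ f x := fun x => ciInf_le hfbdd x
  intro η hη
  obtain ⟨N, hN⟩ := hmono (η / 2) (by linarith)
  -- choose for each x an index n x ≥ N with F (n x) x close to f x
  have hchoice : ∀ x : X, ∃ n : ℕ, N ≤ n ∧ f x - η / 4 < F n x := by
    intro x
    have h1 : ∀ᶠ n in atTop, f x - η / 4 < F n x :=
      (hpt x).eventually (eventually_gt_nhds (by linarith))
    obtain ⟨n, hn1, hn2⟩ := (h1.and (eventually_ge_atTop N)).exists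
    exact ⟨n, hn2, hn1⟩
  choose n hnN hnx using hchoice
  -- open cover
  have hcov : (Set.univ : Set X) ⊆ ⋃ x : X, {y | F (n x) x - η / 4 < F (n x) y} := by
    intro y _
    exact Set.mem_iUnion.2 ⟨y, by simp; linarith⟩
  obtain ⟨t, ht⟩ := isCompact_univ.elim_finite_subcover
    (fun x : X => {y | F (n x) x - η / 4 < F (n x) y})
    (fun x => (lowerSemicontinuous_iff_isOpen_preimage.1 (hlsc (n x)) _)) hcov
  refine ⟨max N (t.sup n), fun m hm => ?_⟩
  refine le_ciInf fun y => ?_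
  obtain ⟨x, hxt, hxy⟩ := Set.mem_iUnion₂.1 (ht (Set.mem_univ y))
  have hnx_le : n x ≤ m := le_trans (Finset.le_sup hxt) (le_trans (le_max_right _ _) hm)
  have h2 : F (n x) y - η / 2 ≤ F m y := hN m (n x) (hnN x) hnx_le y
  have h3 : f x - η / 4 < F (n x) x := hnx x
  have h4 : F (n x) x - η / 4 < F (n x) y := hxy
  have h5 : (⨅ z, f z) ≤ f x := hinf_le x
  linarith
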